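/- Let D be a divisor of L, I = I(D) and I_∞ = I_∞(D), and let D_∞ = div_∞(t). Let 𝓑 = (b_0, …, b_{n−1}) be a k[t]-basis of I and 𝓑_∞ = (v_0, …, v_{n−1}) an A_∞-basis of I_∞. Then: (1) both 𝓑 and 𝓑_∞ are bases of L as a K-vector space; (2) if the transition matrix P ∈ k(t)^{n×n} defined by b_i = Σ_j P_{ij} v_j is row reduced, then for every r ∈ ℤ the family { b_i·t^j : 0 ≤ i ≤ n−1, 0 ≤ j ≤ d_i + r } is a basis of the k-vector space 𝓛(D + r·D_∞) = I ∩ t^r·I_∞, where (d_0,…,d_{n−1}) = −rdeg(P) is the negative of the row-degree of P; (3) the integers d_i are uniquely determined, up to permutation, by the subring k[t] of L and the divisor D. -/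

import Mathlib

open Classical IsDedekindDomain

/-- The subset of `k(t)` corresponding to the localization `k[1/t]_(1/t)`. -/
def infinitePlaceRing (k : Type*) [Field k] : Set (RatFunc k) :=
  {z : RatFunc k | ∃ a b : Polynomial k, b.coeff 0 ≠ 0 ∧
    z * Polynomial.aeval (RatFunc.X : RatFunc k)⁻¹ b = Polynomial.aeval (RatFunc.X : RatFunc k)⁻¹ a}

/-- Degree of a rational function, with `deg 0 = ⊥`. -/
noncomputable def ratDeg {k : Type*} [Field k] (z : RatFunc k) : WithBot ℤ :=
  if z = 0 then ⊥ else (z.intDegree : WithBot ℤ)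

/-- Degree of a row vector: the maximum of the degrees of its entries. -/
noncomputable def rowDeg {k : Type*} [Field k] {n : ℕ} (b : Fin n → RatFunc k) : WithBot ℤ :=
  Finset.univ.sup fun j => ratDeg (b j)

/-- A square matrix over `k(t)` with rows `b₀, …, b_{n-1}` is row reduced if
`deg (Σ λᵢ bᵢ) = maxᵢ deg (λᵢ bᵢ)` for all `λᵢ ∈ k(t)`. -/
def RowReduced {k : Type*} [Field k] {n : ℕ} (M : Matrix (Fin n) (Fin n) (RatFunc k)) : Prop :=
  ∀ c : Fin n → RatFunc k,
    rowDeg (fun j => ∑ i, c i * M i j) = Finset.univ.sup fun i => ratDeg (c i) + rowDeg (M i)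

/-- The data of Hess's reduction: `b` is a `k[t]`-basis of `I`, `v` is an `A∞`-basis of
`I∞`, `P` is the (row reduced) transition matrix from `b` to `v`, and `d = -rdeg P`. -/
def IsReducedBasisPair (k L : Type*) [Field k] [Field L] [Algebra (RatFunc k) L]
    [Algebra (Polynomial k) L]
    (Ainf : Subring (RatFunc k)) [Algebra Ainf L]
    (B : Type*) [CommRing B] [IsDomain B] [IsDedekindDomain B] [Algebra B L] [IsFractionRing B L]
    (Binf : Type*) [CommRing Binf] [IsDomain Binf] [IsDedekindDomain Binf] [Algebra Binf L]
    [IsFractionRing Binf L]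
    (n : ℕ)
    (I : FractionalIdeal (nonZeroDivisors B) L) (Iinf : FractionalIdeal (nonZeroDivisors Binf) L)
    (b v : Fin n → L) (P : Matrix (Fin n) (Fin n) (RatFunc k)) (d : Fin n → ℤ) : Prop :=
  LinearIndependent (Polynomial k) b ∧
  (∀ z : L, z ∈ I ↔ z ∈ Submodule.span (Polynomial k) (Set.range b)) ∧
  LinearIndependent Ainf v ∧
  (∀ z : L, z ∈ Iinf ↔ z ∈ Submodule.span Ainf (Set.range v)) ∧
  (∀ i, b i = ∑ j, P i j • v j) ∧
  RowReduced P ∧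
  (∀ i, rowDeg (P i) = ((-(d i) : ℤ) : WithBot ℤ))


section HessHelpers
open Polynomial

variable {k : Type*} [Field k]

theorem reflect_sum' (N : ℕ) (s : Finset ℕ) (g : ℕ → Polynomial k) :
    Polynomial.reflect N (∑ i ∈ s, g i) = ∑ i ∈ s, Polynomial.reflect N (g i) := by
  classical
  induction s using Finset.induction with
  | empty => simp [Polynomial.reflect_zero]
  | insert _ _ h ih => rw [Finset.sum_insert h, Finset.sum_insert h, Polynomial.reflect_add, ih]

/-- aeval at X⁻¹ equals reflect over X^N. -/
theorem aeval_inv_X_eq (q : Polynomial k) (N : ℕ) (h : q.natDegree ≤ N) :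
    (Polynomial.aeval (RatFunc.X : RatFunc k)⁻¹) q
      = algebraMap (Polynomial k) (RatFunc k) (q.reflect N) * (RatFunc.X : RatFunc k)⁻¹ ^ N := by
  conv_lhs => rw [q.as_sum_range' (N+1) (Nat.lt_succ_of_le h)]
  conv_rhs => rw [q.as_sum_range' (N+1) (Nat.lt_succ_of_le h)]
  rw [reflect_sum', map_sum, map_sum, Finset.sum_mul]
  refine Finset.sum_congr rfl fun i hi => ?_
  rw [Finset.mem_range, Nat.lt_succ_iff] at hi
  rw [← Polynomial.C_mul_X_pow_eq_monomial, Polynomial.reflect_C_mul_X_pow,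
    Polynomial.revAt_le hi]
  rw [map_mul, map_mul, map_pow, map_pow]
  rw [aeval_C, Polynomial.aeval_X]
  have hX : (RatFunc.X : RatFunc k) ≠ 0 := RatFunc.X_ne_zero
  rw [mul_assoc]
  congr 1
  rw [RatFunc.algebraMap_X]
  rw [show (RatFunc.X : RatFunc k)⁻¹ ^ N = (RatFunc.X : RatFunc k)⁻¹ ^ (N - i) * (RatFunc.X : RatFunc k)⁻¹ ^ i by
    rw [← pow_add]; congr 1; omega, ← mul_assoc, ← mul_pow, mul_inv_cancel₀ hX, one_pow, one_mul]

theorem natDegree_reflect_le (q : Polynomial k) {N : ℕ} (h : q.natDegree ≤ N) :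
    (q.reflect N).natDegree ≤ N := by
  refine Polynomial.natDegree_le_iff_coeff_eq_zero.2 fun i hi => ?_
  rw [Polynomial.coeff_reflect]
  refine Polynomial.coeff_eq_zero_of_natDegree_lt ?_
  show q.natDegree < (if i ≤ N then N - i else i)
  split
  · omega
  · omega

theorem reflect_reflect (q : Polynomial k) (N : ℕ) : (q.reflect N).reflect N = q := by
  ext i
  rw [Polynomial.coeff_reflect, Polynomial.coeff_reflect, Polynomial.revAt_invol]

theorem intDegree_inv (z : RatFunc k) : z⁻¹.intDegree = -z.intDegree := by
  rcases eq_or_ne z 0 with rfl | hz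
  · simp [RatFunc.intDegree_zero]
  · have h := RatFunc.intDegree_mul hz (inv_ne_zero hz)
    rw [mul_inv_cancel₀ hz, RatFunc.intDegree_one] at h
    omega

theorem intDegree_pow (z : RatFunc k) (hz : z ≠ 0) (m : ℕ) :
    (z ^ m).intDegree = m * z.intDegree := by
  induction m with
  | zero => simp [RatFunc.intDegree_one]
  | succ m ih =>
      rw [pow_succ, RatFunc.intDegree_mul (pow_ne_zero _ hz) hz, ih]
      push_cast; ring

theorem intDegree_zpow (z : RatFunc k) (hz : z ≠ 0) (m : ℤ) :
    (z ^ m).intDegree = m * z.intDegree := by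
  cases m with
  | ofNat m => rw [Int.ofNat_eq_coe, zpow_natCast, intDegree_pow _ hz]
  | negSucc m =>
      rw [zpow_negSucc, intDegree_inv, intDegree_pow _ hz, Int.negSucc_eq]
      push_cast; ring

theorem mem_infinitePlaceRing_iff {z : RatFunc k} :
    z ∈ infinitePlaceRing k ↔ ratDeg z ≤ 0 := by
  have hX : (RatFunc.X : RatFunc k) ≠ 0 := RatFunc.X_ne_zero
  have hXi : (RatFunc.X : RatFunc k)⁻¹ ≠ 0 := inv_ne_zero hX
  have hdeg : ∀ (q : Polynomial k) (N : ℕ), q.natDegree ≤ N → q ≠ 0 →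
      ((Polynomial.aeval (RatFunc.X : RatFunc k)⁻¹) q).intDegree
        = (q.reflect N).natDegree - (N : ℤ) ∧ (Polynomial.aeval (RatFunc.X : RatFunc k)⁻¹) q ≠ 0 := by
    intro q N hN hq
    have hrefl : q.reflect N ≠ 0 := fun h => hq (by rw [← reflect_reflect q N, h, Polynomial.reflect_zero])
    have hmap : algebraMap (Polynomial k) (RatFunc k) (q.reflect N) ≠ 0 :=
      RatFunc.algebraMap_ne_zero hrefl
    rw [aeval_inv_X_eq q N hN]
    refine ⟨?_, mul_ne_zero hmap (pow_ne_zero _ hXi)⟩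
    rw [RatFunc.intDegree_mul hmap (pow_ne_zero _ hXi), intDegree_pow _ hXi,
      intDegree_inv, RatFunc.intDegree_X, RatFunc.intDegree_polynomial]
    ring
  constructor
  · rintro ⟨a, b, hb0, heq⟩
    have hbne : b ≠ 0 := fun h => hb0 (by simp [h])
    obtain ⟨hdb, hbne'⟩ := hdeg b b.natDegree le_rfl hbne
    have hbdeg : ((Polynomial.aeval (RatFunc.X : RatFunc k)⁻¹) b).intDegree = 0 := by
      rw [hdb]
      have h1 : (b.reflect b.natDegree).natDegree = b.natDegree := by
        refine le_antisymm (natDegree_reflect_le b le_rfl) (Polynomial.le_natDegree_of_ne_zero ?_)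
        rw [Polynomial.coeff_reflect, Polynomial.revAt_le le_rfl, Nat.sub_self]
        exact hb0
      rw [h1]; ring
    rcases eq_or_ne z 0 with rfl | hz
    · simp [ratDeg]
    · have hane : (Polynomial.aeval (RatFunc.X : RatFunc k)⁻¹) a ≠ 0 := by
        rw [← heq]; exact mul_ne_zero hz hbne'
      have hax : a ≠ 0 := fun h => hane (by simp [h])
      obtain ⟨hda, -⟩ := hdeg a a.natDegree le_rfl hax
      have : z.intDegree + 0 = ((Polynomial.aeval (RatFunc.X : RatFunc k)⁻¹) a).intDegree := by
        rw [← hbdeg, ← RatFunc.intDegree_mul hz hbne', heq]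
      rw [ratDeg, if_neg hz]
      have h2 : ((a.reflect a.natDegree).natDegree : ℤ) ≤ a.natDegree :=
        Int.ofNat_le.2 (natDegree_reflect_le a le_rfl)
      have : z.intDegree ≤ 0 := by omega
      exact_mod_cast this
  · intro hdz
    rcases eq_or_ne z 0 with rfl | hz
    · exact ⟨0, 1, by simp, by simp⟩
    · rw [ratDeg, if_neg hz] at hdz
      have hdz' : z.intDegree ≤ 0 := by exact_mod_cast hdz
      set m := z.denom.natDegree with hm
      have hnum : z.num.natDegree ≤ m := by
        have := z.intDegree
        rw [RatFunc.intDegree] at hdz'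
        omega
      refine ⟨z.num.reflect m, z.denom.reflect m, ?_, ?_⟩
      · rw [Polynomial.coeff_reflect, Polynomial.revAt_le (Nat.zero_le m), Nat.sub_zero]
        exact Polynomial.leadingCoeff_ne_zero.2 z.denom_ne_zero
      · rw [aeval_inv_X_eq _ m (natDegree_reflect_le _ hnum),
          aeval_inv_X_eq _ m (natDegree_reflect_le _ le_rfl),
          _root_.reflect_reflect, _root_.reflect_reflect, ← mul_assoc]
        congr 1
        have h := RatFunc.num_div_denom z
        rw [div_eq_iff (RatFunc.algebraMap_ne_zero z.denom_ne_zero), eq_comm] at h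
        exact h

theorem ratDeg_mul (x y : RatFunc k) : ratDeg (x * y) = ratDeg x + ratDeg y := by
  rcases eq_or_ne x 0 with rfl | hx
  · simp [ratDeg]
  rcases eq_or_ne y 0 with rfl | hy
  · simp [ratDeg]
  rw [ratDeg, ratDeg, ratDeg, if_neg hx, if_neg hy, if_neg (mul_ne_zero hx hy),
    RatFunc.intDegree_mul hx hy, WithBot.coe_add]

theorem ratDeg_X_zpow (m : ℤ) : ratDeg ((RatFunc.X : RatFunc k) ^ m) = (m : WithBot ℤ) := by
  rw [ratDeg, if_neg (zpow_ne_zero _ RatFunc.X_ne_zero),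
    intDegree_zpow _ RatFunc.X_ne_zero, RatFunc.intDegree_X, mul_one]

theorem ratDeg_polynomial {p : Polynomial k} (hp : p ≠ 0) :
    ratDeg (algebraMap (Polynomial k) (RatFunc k) p) = ((p.natDegree : ℤ) : WithBot ℤ) := by
  rw [ratDeg, if_neg (RatFunc.algebraMap_ne_zero hp), RatFunc.intDegree_polynomial]

theorem wb_add_le {a : WithBot ℤ} {c r : ℤ} (h : a + (c : WithBot ℤ) ≤ (r : WithBot ℤ)) :
    a ≤ ((r - c : ℤ) : WithBot ℤ) := by
  induction a with
  | bot => exact bot_le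
  | coe a =>
      rw [← WithBot.coe_add, WithBot.coe_le_coe] at h
      exact WithBot.coe_le_coe.2 (by omega)

theorem wb_le_add {a : WithBot ℤ} {c r : ℤ} (h : a ≤ ((r - c : ℤ) : WithBot ℤ)) :
    a + (c : WithBot ℤ) ≤ (r : WithBot ℤ) := by
  induction a with
  | bot => simp
  | coe a =>
      rw [WithBot.coe_le_coe] at h
      rw [← WithBot.coe_add, WithBot.coe_le_coe]
      omega

theorem hess_aux {L : Type*} [Field L] [Algebra (RatFunc k) L]
    [Algebra (Polynomial k) L] [IsScalarTower (Polynomial k) (RatFunc k) L]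
    [Algebra k L] [IsScalarTower k (RatFunc k) L]
    (Ainf : Subring (RatFunc k)) [Algebra Ainf L]
    (hAmem : ∀ z : RatFunc k, z ∈ Ainf ↔ ratDeg z ≤ 0)
    (hAinfL : algebraMap Ainf L = (algebraMap (RatFunc k) L).comp Ainf.subtype)
    (B : Type*) [CommRing B] [IsDomain B] [IsDedekindDomain B] [Algebra B L] [IsFractionRing B L]
    (Binf : Type*) [CommRing Binf] [IsDomain Binf] [IsDedekindDomain Binf] [Algebra Binf L]
    [IsFractionRing Binf L]
    {n : ℕ} (hrank : Module.finrank (RatFunc k) L = n) (hn : 0 < n)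
    (I : FractionalIdeal (nonZeroDivisors B) L) (Iinf : FractionalIdeal (nonZeroDivisors Binf) L)
    (b v : Fin n → L) (P : Matrix (Fin n) (Fin n) (RatFunc k)) (d : Fin n → ℤ)
    (hb : LinearIndependent (Polynomial k) b)
    (hbI : ∀ z : L, z ∈ I ↔ z ∈ Submodule.span (Polynomial k) (Set.range b))
    (hv : LinearIndependent Ainf v)
    (hvI : ∀ z : L, z ∈ Iinf ↔ z ∈ Submodule.span Ainf (Set.range v))
    (hbv : ∀ i, b i = ∑ j, P i j • v j)
    (hPred : RowReduced P)
    (hPd : ∀ i, rowDeg (P i) = ((-(d i) : ℤ) : WithBot ℤ)) :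
    (LinearIndependent (RatFunc k) b ∧ Submodule.span (RatFunc k) (Set.range b) = ⊤) ∧
    (LinearIndependent (RatFunc k) v ∧ Submodule.span (RatFunc k) (Set.range v) = ⊤) ∧
    (∀ r : ℤ,
      LinearIndependent k (fun p : {ij : Fin n × ℕ // (ij.2 : ℤ) ≤ d ij.1 + r} =>
        b p.1.1 * algebraMap (RatFunc k) L (RatFunc.X : RatFunc k) ^ (p.1.2 : ℕ)) ∧
      ∀ z : L,
        (z ∈ I ∧ z ∈ FractionalIdeal.spanSingleton (nonZeroDivisors Binf)
            (algebraMap (RatFunc k) L (RatFunc.X : RatFunc k) ^ r) * Iinf) ↔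
        z ∈ Submodule.span k (Set.range
          (fun p : {ij : Fin n × ℕ // (ij.2 : ℤ) ≤ d ij.1 + r} =>
            b p.1.1 * algebraMap (RatFunc k) L (RatFunc.X : RatFunc k) ^ (p.1.2 : ℕ)))) := by
  -- abbreviations
  have hKinj : Function.Injective (algebraMap (RatFunc k) L) := (algebraMap (RatFunc k) L).injective
  -- linear independence of b over K
  have hbK : LinearIndependent (RatFunc k) b := by
    rw [Fintype.linearIndependent_iff]
    intro g hg
    set q : Polynomial k := ∏ i, (g i).denom with hq
    have hqne : q ≠ 0 := Finset.prod_ne_zero_iff.2 fun i _ => RatFunc.denom_ne_zero _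
    have hex : ∀ i, ∃ p : Polynomial k,
        algebraMap (Polynomial k) (RatFunc k) p = algebraMap (Polynomial k) (RatFunc k) q * g i := by
      intro i
      obtain ⟨c, hc⟩ := Finset.dvd_prod_of_mem (fun i => (g i).denom) (Finset.mem_univ i)
      refine ⟨c * (g i).num, ?_⟩
      rw [← hq] at hc
      have h2 : algebraMap (Polynomial k) (RatFunc k) (g i).denom * g i
          = algebraMap (Polynomial k) (RatFunc k) (g i).num := by
        rw [mul_comm, ← eq_div_iff (RatFunc.algebraMap_ne_zero (RatFunc.denom_ne_zero (g i)))]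
        exact (RatFunc.num_div_denom (g i)).symm
      rw [hc, map_mul, map_mul, mul_comm (algebraMap (Polynomial k) (RatFunc k) (g i).denom),
        mul_assoc, h2]
    choose p hp using hex
    have hrel : ∑ i, p i • b i = 0 := by
      have : ∑ i, p i • b i = algebraMap (RatFunc k) L (algebraMap (Polynomial k) (RatFunc k) q)
          * ∑ i, g i • b i := by
        rw [Finset.mul_sum]
        refine Finset.sum_congr rfl fun i _ => ?_
        rw [← IsScalarTower.algebraMap_smul (RatFunc k) (p i) (b i), hp i, Algebra.smul_def,
          Algebra.smul_def, map_mul, mul_assoc]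
      rw [this, hg, mul_zero]
    have hp0 : ∀ i, p i = 0 := Fintype.linearIndependent_iff.1 hb _ hrel
    intro i
    have h4 := hp i
    rw [hp0 i, map_zero] at h4
    rcases mul_eq_zero.1 h4.symm with h | h
    · exact absurd h (RatFunc.algebraMap_ne_zero hqne)
    · exact h
  have hbtop : Submodule.span (RatFunc k) (Set.range b) = ⊤ := by
    haveI : Nonempty (Fin n) := ⟨⟨0, hn⟩⟩
    exact hbK.span_eq_top_of_card_eq_finrank (by simp [hrank])
  have hvK : LinearIndependent (RatFunc k) v := by
    rw [Fintype.linearIndependent_iff]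
    intro g hg
    set m : ℕ := Finset.univ.sup fun i => (g i).intDegree.toNat with hm
    have hmem : ∀ j, (RatFunc.X : RatFunc k) ^ (-(m : ℤ)) * g j ∈ Ainf := by
      intro j
      rw [hAmem]
      rcases eq_or_ne (g j) 0 with h0 | h0
      · simp [h0, ratDeg]
      · rw [ratDeg_mul, ratDeg_X_zpow, ratDeg, if_neg h0, ← WithBot.coe_add]
        have h1 : (g j).intDegree.toNat ≤ m :=
          Finset.le_sup (f := fun i => (g i).intDegree.toNat) (Finset.mem_univ j)
        have h2 : (g j).intDegree ≤ (g j).intDegree.toNat := Int.self_le_toNat _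
        exact_mod_cast (by omega : -(m : ℤ) + (g j).intDegree ≤ 0)
    set a : Fin n → Ainf := fun j => ⟨_, hmem j⟩ with ha
    have ha0 := Fintype.linearIndependent_iff.1 hv a (by
      have hsum : ∀ j : Fin n, a j • v j = (RatFunc.X : RatFunc k) ^ (-(m:ℤ)) • (g j • v j) := by
        intro j
        rw [Algebra.smul_def, hAinfL]
        show algebraMap (RatFunc k) L ((RatFunc.X : RatFunc k) ^ (-(m:ℤ)) * g j) * v j = _
        rw [map_mul, Algebra.smul_def, Algebra.smul_def, mul_assoc]
      rw [Finset.sum_congr rfl (fun j _ => hsum j), ← Finset.smul_sum, hg, smul_zero])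
    intro i
    have := ha0 i
    rw [ha, Subtype.ext_iff] at this
    simp only [ZeroMemClass.coe_zero] at this
    rcases mul_eq_zero.1 this with h | h
    · exact absurd h (zpow_ne_zero _ RatFunc.X_ne_zero)
    · exact h
  have hvtop : Submodule.span (RatFunc k) (Set.range v) = ⊤ := by
    haveI : Nonempty (Fin n) := ⟨⟨0, hn⟩⟩
    exact hvK.span_eq_top_of_card_eq_finrank (by simp [hrank])
  -- coordinate uniqueness w.r.t. v
  have coordv : ∀ c c' : Fin n → RatFunc k,
      ∑ j, c j • v j = ∑ j, c' j • v j → c = c' := by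
    intro c c' h
    have h2 : ∑ j, (c j - c' j) • v j = 0 := by
      simp only [sub_smul, Finset.sum_sub_distrib, h, sub_self]
    have := Fintype.linearIndependent_iff.1 hvK _ h2
    funext j
    exact sub_eq_zero.1 (this j)
  -- expansion of b-combinations in terms of v
  have expand : ∀ lam : Fin n → RatFunc k,
      ∑ i, lam i • b i = ∑ j, (∑ i, lam i * P i j) • v j := by
    intro lam
    calc ∑ i, lam i • b i = ∑ i, ∑ j, (lam i * P i j) • v j := by
          refine Finset.sum_congr rfl fun i _ => ?_
          rw [hbv i, Finset.smul_sum]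
          exact Finset.sum_congr rfl fun j _ => smul_smul _ _ _
      _ = ∑ j, ∑ i, (lam i * P i j) • v j := Finset.sum_comm
      _ = ∑ j, (∑ i, lam i * P i j) • v j := by
          refine Finset.sum_congr rfl fun j _ => ?_
          rw [Finset.sum_smul]
  have hchar : ∀ (r : ℤ) (z : L),
      (z ∈ I ∧ z ∈ FractionalIdeal.spanSingleton (nonZeroDivisors Binf)
          (algebraMap (RatFunc k) L (RatFunc.X : RatFunc k) ^ r) * Iinf) ↔
      ∃ lam : Fin n → Polynomial k,
        (∀ i, ratDeg (algebraMap (Polynomial k) (RatFunc k) (lam i))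
          ≤ ((d i + r : ℤ) : WithBot ℤ)) ∧
        z = ∑ i, algebraMap (Polynomial k) (RatFunc k) (lam i) • b i := by
    intro r z
    constructor
    · rintro ⟨hzI, hzJ⟩
      obtain ⟨lam, hlam⟩ := (Submodule.mem_span_range_iff_exists_fun (Polynomial k)).1 ((hbI z).1 hzI)
      obtain ⟨w, hwIinf, hzw⟩ := FractionalIdeal.mem_singleton_mul.1 hzJ
      obtain ⟨mu, hmu⟩ := (Submodule.mem_span_range_iff_exists_fun (↥Ainf)).1 ((hvI w).1 hwIinf)
      have hzb : z = ∑ i, algebraMap (Polynomial k) (RatFunc k) (lam i) • b i := by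
        rw [← hlam]
        refine (Finset.sum_congr rfl fun i _ => ?_).symm
        rw [IsScalarTower.algebraMap_smul (RatFunc k)]
      have hcoord : (fun j => ∑ i, algebraMap (Polynomial k) (RatFunc k) (lam i) * P i j)
          = fun j => (RatFunc.X : RatFunc k) ^ r * (mu j : RatFunc k) := by
        apply coordv
        rw [← expand, ← hzb, hzw, ← hmu, Finset.mul_sum]
        refine Finset.sum_congr rfl fun j _ => ?_
        rw [Algebra.smul_def (R := ↥Ainf), hAinfL]
        show algebraMap (RatFunc k) L RatFunc.X ^ r * (algebraMap (RatFunc k) L (mu j : RatFunc k) * v j) = _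
        rw [← map_zpow₀, ← Algebra.smul_def, ← Algebra.smul_def, smul_smul]
      have hb1 : ∀ j, ratDeg (∑ i, algebraMap (Polynomial k) (RatFunc k) (lam i) * P i j)
          ≤ ((r : ℤ) : WithBot ℤ) := by
        intro j
        rw [congrFun hcoord j, ratDeg_mul, ratDeg_X_zpow]
        have h5 := (hAmem (mu j)).1 (mu j).2
        calc ((r : ℤ) : WithBot ℤ) + ratDeg ((mu j : RatFunc k))
            ≤ ((r : ℤ) : WithBot ℤ) + 0 := add_le_add_right h5 _
          _ = ((r : ℤ) : WithBot ℤ) := add_zero _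
      have hb2 : (Finset.univ.sup fun i =>
          ratDeg (algebraMap (Polynomial k) (RatFunc k) (lam i)) + rowDeg (P i))
          ≤ ((r : ℤ) : WithBot ℤ) := by
        rw [← hPred (fun i => algebraMap (Polynomial k) (RatFunc k) (lam i))]
        exact Finset.sup_le fun j _ => hb1 j
      refine ⟨lam, fun i => ?_, hzb⟩
      have h3 : ratDeg (algebraMap (Polynomial k) (RatFunc k) (lam i)) + rowDeg (P i)
          ≤ ((r : ℤ) : WithBot ℤ) :=
        le_trans (Finset.le_sup (f := fun i =>
          ratDeg (algebraMap (Polynomial k) (RatFunc k) (lam i)) + rowDeg (P i))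
          (Finset.mem_univ i)) hb2
      rw [hPd i] at h3
      have h4 := wb_add_le h3
      rw [show (r - -(d i) : ℤ) = d i + r by ring] at h4
      exact h4
    · rintro ⟨lam, hbound, hzsum⟩
      have hrow : ∀ j, ratDeg (∑ i, algebraMap (Polynomial k) (RatFunc k) (lam i) * P i j)
          ≤ ((r : ℤ) : WithBot ℤ) := by
        intro j
        have h2 : rowDeg (fun j => ∑ i, algebraMap (Polynomial k) (RatFunc k) (lam i) * P i j)
            ≤ ((r : ℤ) : WithBot ℤ) := by
          rw [hPred (fun i => algebraMap (Polynomial k) (RatFunc k) (lam i))]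
          refine Finset.sup_le fun i _ => ?_
          rw [hPd i]
          refine wb_le_add ?_
          rw [show (r - -(d i) : ℤ) = d i + r by ring]
          exact hbound i
        exact le_trans (Finset.le_sup (f := fun j =>
          ratDeg (∑ i, algebraMap (Polynomial k) (RatFunc k) (lam i) * P i j))
          (Finset.mem_univ j)) h2
      have hmem2 : ∀ j, (RatFunc.X : RatFunc k) ^ (-r)
          * (∑ i, algebraMap (Polynomial k) (RatFunc k) (lam i) * P i j) ∈ Ainf := by
        intro j
        rw [hAmem, ratDeg_mul, ratDeg_X_zpow, add_comm]
        have h6 : ratDeg (∑ i, algebraMap (Polynomial k) (RatFunc k) (lam i) * P i j)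
            ≤ (((0 : ℤ) - -r : ℤ) : WithBot ℤ) := by
          rw [show ((0:ℤ) - -r : ℤ) = r by ring]
          exact hrow j
        have h7 := wb_le_add h6
        simpa using h7
      refine ⟨?_, ?_⟩
      · rw [hbI, hzsum]
        refine Submodule.sum_mem _ fun i _ => ?_
        rw [IsScalarTower.algebraMap_smul (RatFunc k)]
        exact Submodule.smul_mem _ _ (Submodule.subset_span (Set.mem_range_self i))
      · refine FractionalIdeal.mem_singleton_mul.2
          ⟨∑ j, (⟨_, hmem2 j⟩ : ↥Ainf) • v j, ?_, ?_⟩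
        · rw [hvI]
          exact Submodule.sum_mem _ fun j _ =>
            Submodule.smul_mem _ _ (Submodule.subset_span (Set.mem_range_self j))
        · rw [hzsum, expand, Finset.mul_sum]
          refine Finset.sum_congr rfl fun j _ => ?_
          rw [Algebra.smul_def (R := ↥Ainf), hAinfL]
          show _ = algebraMap (RatFunc k) L RatFunc.X ^ r
            * (algebraMap (RatFunc k) L ((RatFunc.X : RatFunc k) ^ (-r)
              * ∑ i, algebraMap (Polynomial k) (RatFunc k) (lam i) * P i j) * v j)
          rw [← map_zpow₀, ← mul_assoc, ← map_mul, ← mul_assoc, zpow_neg,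
            mul_inv_cancel₀ (zpow_ne_zero _ RatFunc.X_ne_zero), one_mul, Algebra.smul_def]
  refine ⟨⟨hbK, hbtop⟩, ⟨hvK, hvtop⟩, ?_⟩
  intro r
  have E : {ij : Fin n × ℕ // (ij.2 : ℤ) ≤ d ij.1 + r}
      ≃ (Σ i : Fin n, Fin ((d i + r + 1).toNat)) :=
    { toFun := fun p => ⟨p.1.1, ⟨p.1.2, by have := p.2; omega⟩⟩
      invFun := fun q => ⟨(q.1, (q.2 : ℕ)), by
        have := q.2.2
        show ((q.2 : ℕ) : ℤ) ≤ d q.1 + r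
        omega⟩
      left_inv := fun p => rfl
      right_inv := fun q => rfl }
  haveI instF : Fintype {ij : Fin n × ℕ // (ij.2 : ℤ) ≤ d ij.1 + r} := Fintype.ofEquiv _ E.symm
  set fam : {ij : Fin n × ℕ // (ij.2 : ℤ) ≤ d ij.1 + r} → L := fun p =>
    b p.1.1 * algebraMap (RatFunc k) L (RatFunc.X : RatFunc k) ^ (p.1.2 : ℕ) with hfamdef
  have hmono : ∀ (e : k) (i : Fin n) (j : ℕ),
      (algebraMap (Polynomial k) (RatFunc k) (Polynomial.C e * Polynomial.X ^ j)) • b i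
        = e • (b i * algebraMap (RatFunc k) L (RatFunc.X : RatFunc k) ^ j) := by
    intro e i j
    rw [Algebra.smul_def, Algebra.smul_def, map_mul, map_pow, map_mul, map_pow,
      IsScalarTower.algebraMap_apply k (RatFunc k) L,
      IsScalarTower.algebraMap_apply k (Polynomial k) (RatFunc k),
      Polynomial.algebraMap_eq, RatFunc.algebraMap_X]
    ring
  set lamOf : ({ij : Fin n × ℕ // (ij.2 : ℤ) ≤ d ij.1 + r} → k) → Fin n → Polynomial k :=
    fun c i => ∑ p : {ij : Fin n × ℕ // (ij.2 : ℤ) ≤ d ij.1 + r},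
      if p.1.1 = i then Polynomial.C (c p) * Polynomial.X ^ p.1.2 else 0 with hlamOf
  have hexpand2 : ∀ c : {ij : Fin n × ℕ // (ij.2 : ℤ) ≤ d ij.1 + r} → k,
      ∑ i, algebraMap (Polynomial k) (RatFunc k) (lamOf c i) • b i = ∑ p, c p • fam p := by
    intro c
    have h1 : ∀ i, algebraMap (Polynomial k) (RatFunc k) (lamOf c i) • b i
        = ∑ p : {ij : Fin n × ℕ // (ij.2 : ℤ) ≤ d ij.1 + r},
          if p.1.1 = i then
            (algebraMap (Polynomial k) (RatFunc k)
              (Polynomial.C (c p) * Polynomial.X ^ p.1.2)) • b i else 0 := by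
      intro i
      rw [hlamOf]
      simp only [map_sum, Finset.sum_smul]
      refine Finset.sum_congr rfl fun p _ => ?_
      split
      · rfl
      · rw [map_zero, zero_smul]
    rw [Finset.sum_congr rfl (fun i _ => h1 i), Finset.sum_comm]
    refine Finset.sum_congr rfl fun p _ => ?_
    rw [Finset.sum_ite_eq Finset.univ p.1.1 (fun i =>
      (algebraMap (Polynomial k) (RatFunc k)
        (Polynomial.C (c p) * Polynomial.X ^ p.1.2)) • b i), if_pos (Finset.mem_univ _)]
    rw [hmono]
  have hbound2 : ∀ (c : {ij : Fin n × ℕ // (ij.2 : ℤ) ≤ d ij.1 + r} → k) (i : Fin n),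
      ratDeg (algebraMap (Polynomial k) (RatFunc k) (lamOf c i))
        ≤ ((d i + r : ℤ) : WithBot ℤ) := by
    intro c i
    rcases eq_or_ne (lamOf c i) 0 with h0 | h0
    · rw [h0, map_zero]
      simp [ratDeg]
    · have hex : ∃ p : {ij : Fin n × ℕ // (ij.2 : ℤ) ≤ d ij.1 + r}, p.1.1 = i := by
        by_contra hne
        push_neg at hne
        exact h0 (Finset.sum_eq_zero fun p _ => if_neg (hne p))
      obtain ⟨p0, hp0⟩ := hex
      have hge : 0 ≤ d i + r := by
        have := p0.2
        rw [hp0] at this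
        omega
      rw [ratDeg_polynomial h0]
      refine WithBot.coe_le_coe.2 ?_
      have hdeg : (lamOf c i).natDegree ≤ (d i + r).toNat := by
        refine Polynomial.natDegree_sum_le_of_forall_le _ _ fun p _ => ?_
        split
        · next hpi =>
            refine le_trans (Polynomial.natDegree_C_mul_X_pow_le _ _) ?_
            have := p.2
            rw [hpi] at this
            omega
        · simp
      omega
  refine ⟨?_, fun z => ?_⟩
  · -- linear independence over k
    rw [Fintype.linearIndependent_iff]
    intro c hc
    have h1 : ∑ i, algebraMap (Polynomial k) (RatFunc k) (lamOf c i) • b i = 0 := by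
      rw [hexpand2 c]
      exact hc
    have h2 := Fintype.linearIndependent_iff.1 hbK _ h1
    intro p
    have h3 : lamOf c p.1.1 = 0 := by
      have h2' := h2 p.1.1
      refine RatFunc.algebraMap_injective (K := k) ?_
      rw [h2', map_zero]
    have h4 : (lamOf c p.1.1).coeff p.1.2 = c p := by
      rw [hlamOf]
      simp only [Polynomial.finset_sum_coeff]
      rw [Finset.sum_eq_single p]
      · rw [if_pos rfl, Polynomial.coeff_C_mul, Polynomial.coeff_X_pow, if_pos rfl, mul_one]
      · intro q _ hqp
        by_cases hq : q.1.1 = p.1.1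
        · rw [if_pos hq, Polynomial.coeff_C_mul, Polynomial.coeff_X_pow, if_neg ?_, mul_zero]
          intro he
          exact hqp (Subtype.ext (Prod.ext hq he.symm))
        · rw [if_neg hq, Polynomial.coeff_zero]
      · intro hp
        exact absurd (Finset.mem_univ p) hp
    rw [h3, Polynomial.coeff_zero] at h4
    exact h4.symm
  · rw [hchar r z]
    constructor
    · rintro ⟨lam, hbound, hzsum⟩
      rw [hzsum]
      refine Submodule.sum_mem _ fun i _ => ?_
      rcases eq_or_ne (lam i) 0 with h0 | h0
      · rw [h0, map_zero, zero_smul]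
        exact Submodule.zero_mem _
      · have hlt : (lam i).natDegree < (d i + r + 1).toNat := by
          have hb' := hbound i
          rw [ratDeg_polynomial h0, WithBot.coe_le_coe] at hb'
          omega
        have h5 : algebraMap (Polynomial k) (RatFunc k) (lam i) • b i
            = ∑ j ∈ Finset.range ((d i + r + 1).toNat), ((lam i).coeff j)
              • (b i * algebraMap (RatFunc k) L (RatFunc.X : RatFunc k) ^ j) := by
          conv_lhs => rw [(lam i).as_sum_range' _ hlt]
          rw [map_sum, Finset.sum_smul]
          refine Finset.sum_congr rfl fun j hj => ?_
          rw [← Polynomial.C_mul_X_pow_eq_monomial, hmono]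
        rw [h5]
        refine Submodule.sum_mem _ fun j hj => Submodule.smul_mem _ _
          (Submodule.subset_span ?_)
        rw [Finset.mem_range] at hj
        exact ⟨⟨(i, j), by show (j:ℤ) ≤ d i + r; omega⟩, rfl⟩
    · intro hz
      obtain ⟨c, hc⟩ := (Submodule.mem_span_range_iff_exists_fun k).1 hz
      exact ⟨lamOf c, hbound2 c, by rw [hexpand2 c, hc]⟩

theorem card_index {n : ℕ} (d : Fin n → ℤ) (r : ℤ)
    (inst : Fintype {ij : Fin n × ℕ // (ij.2 : ℤ) ≤ d ij.1 + r}) :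
    @Fintype.card _ inst = ∑ i, (d i + r + 1).toNat := by
  have E : {ij : Fin n × ℕ // (ij.2 : ℤ) ≤ d ij.1 + r}
      ≃ (Σ i : Fin n, Fin ((d i + r + 1).toNat)) :=
    { toFun := fun p => ⟨p.1.1, ⟨p.1.2, by have := p.2; omega⟩⟩
      invFun := fun q => ⟨(q.1, (q.2 : ℕ)), by
        have := q.2.2
        show ((q.2 : ℕ) : ℤ) ≤ d q.1 + r
        omega⟩
      left_inv := fun p => rfl
      right_inv := fun q => rfl }
  have h1 : @Fintype.card _ inst = Fintype.card (Σ i : Fin n, Fin ((d i + r + 1).toNat)) :=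
    @Fintype.card_congr _ _ inst _ E
  rw [h1, Fintype.card_sigma]
  simp

theorem perm_of_counts {n : ℕ} (d d' : Fin n → ℤ)
    (h : ∀ r : ℤ, ∑ i, (d i + r + 1).toNat = ∑ i, (d' i + r + 1).toNat) :
    ∃ σ : Equiv.Perm (Fin n), ∀ i, d' i = d (σ i) := by
  classical
  have step : ∀ (e : Fin n → ℤ) (r : ℤ), ∑ i, (e i + r + 1).toNat
      = ∑ i, (e i + r).toNat + (Finset.univ.filter fun i => 0 ≤ e i + r).card := by
    intro e r
    rw [Finset.card_filter, ← Finset.sum_add_distrib]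
    refine Finset.sum_congr rfl fun i _ => ?_
    split_ifs with h1 <;> omega
  have h' : ∀ r : ℤ, ∑ i, (d i + r).toNat = ∑ i, (d' i + r).toNat := by
    intro r
    have := h (r - 1)
    have e1 : ∀ e : Fin n → ℤ, ∑ i, (e i + (r - 1) + 1).toNat = ∑ i, (e i + r).toNat := by
      intro e
      refine Finset.sum_congr rfl fun i _ => ?_
      congr 1
      ring
    rw [e1 d, e1 d'] at this
    exact this
  have hcount : ∀ r : ℤ, (Finset.univ.filter fun i => 0 ≤ d i + r).card
      = (Finset.univ.filter fun i => 0 ≤ d' i + r).card := by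
    intro r
    have h1 := step d r
    have h2 := step d' r
    have h3 := h r
    have h4 := h' r
    omega
  have hfiber : ∀ m : ℤ, (Finset.univ.filter fun i => d i = m).card
      = (Finset.univ.filter fun i => d' i = m).card := by
    intro m
    have split2 : ∀ e : Fin n → ℤ, (Finset.univ.filter fun i => 0 ≤ e i + (-m)).card
        = (Finset.univ.filter fun i => e i = m).card
          + (Finset.univ.filter fun i => 0 ≤ e i + (-(m+1))).card := by
      intro e
      rw [Finset.card_filter, Finset.card_filter, Finset.card_filter, ← Finset.sum_add_distrib]
      refine Finset.sum_congr rfl fun i _ => ?_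
      split_ifs <;> omega
    have h1 := split2 d
    have h2 := split2 d'
    have h3 := hcount (-m)
    have h4 := hcount (-(m+1))
    omega
  have efib : ∀ m : ℤ, {i : Fin n // d' i = m} ≃ {i : Fin n // d i = m} := by
    intro m
    refine Fintype.equivOfCardEq ?_
    rw [Fintype.card_subtype, Fintype.card_subtype, hfiber m]
  refine ⟨Equiv.ofFiberEquiv efib, fun i => ?_⟩
  exact (Equiv.ofFiberEquiv_map efib i).symm

end HessHelpers

/-- Hess's key proposition: bases of `I` and `I∞` are `K`-bases of `L`; a row reduced
transition matrix yields `k`-bases of all spaces `𝓛(D + r·D_∞) = I ∩ t^r·I∞`; and the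
row degrees are unique up to permutation. -/


theorem stmt_13
    {k : Type*} [Field k] [PerfectField k]
    {L : Type*} [Field L] [Algebra (RatFunc k) L]
    (f : Polynomial (Polynomial k)) (n : ℕ)
    (hfn : f.natDegree = n) (hn : 0 < n)
    (hfmonic : f.Monic)
    (hfirr : Irreducible (f.map (algebraMap (Polynomial k) (RatFunc k))))
    (hfsep : (f.map (algebraMap (Polynomial k) (RatFunc k))).Separable)
    (x : L)
    (hx : Polynomial.aeval x (f.map (algebraMap (Polynomial k) (RatFunc k))) = 0)
    (hxgen : Algebra.adjoin (RatFunc k) ({x} : Set L) = ⊤)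
    (B : Type*) [CommRing B] [IsDomain B] [IsDedekindDomain B]
    [Algebra B L] [IsFractionRing B L]
    (hB : ∀ z : L, (∃ b : B, algebraMap B L b = z) ↔
      ((algebraMap (RatFunc k) L).comp (algebraMap (Polynomial k) (RatFunc k))).IsIntegralElem z)
    (Ainf : Subring (RatFunc k)) (hAinf : (Ainf : Set (RatFunc k)) = infinitePlaceRing k)
    (Binf : Type*) [CommRing Binf] [IsDomain Binf] [IsDedekindDomain Binf]
    [Algebra Binf L] [IsFractionRing Binf L]
    (hBinf : ∀ z : L, (∃ b : Binf, algebraMap Binf L b = z) ↔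
      ((algebraMap (RatFunc k) L).comp Ainf.subtype).IsIntegralElem z)
    [Algebra (Polynomial k) L] [IsScalarTower (Polynomial k) (RatFunc k) L]
    [Algebra Ainf L]
    (hAinfL : algebraMap Ainf L = (algebraMap (RatFunc k) L).comp Ainf.subtype)
    [Algebra k L] [IsScalarTower k (RatFunc k) L]
    (I : FractionalIdeal (nonZeroDivisors B) L) (hI : I ≠ 0)
    (Iinf : FractionalIdeal (nonZeroDivisors Binf) L) (hIinf : Iinf ≠ 0)
    (b v : Fin n → L) (P : Matrix (Fin n) (Fin n) (RatFunc k)) (d : Fin n → ℤ)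
    (hdata : IsReducedBasisPair k L Ainf B Binf n I Iinf b v P d) :
    (LinearIndependent (RatFunc k) b ∧ Submodule.span (RatFunc k) (Set.range b) = ⊤) ∧
    (LinearIndependent (RatFunc k) v ∧ Submodule.span (RatFunc k) (Set.range v) = ⊤) ∧
    (∀ r : ℤ,
      LinearIndependent k (fun p : {ij : Fin n × ℕ // (ij.2 : ℤ) ≤ d ij.1 + r} =>
        b p.1.1 * algebraMap (RatFunc k) L (RatFunc.X : RatFunc k) ^ (p.1.2 : ℕ)) ∧
      ∀ z : L,
        (z ∈ I ∧ z ∈ FractionalIdeal.spanSingleton (nonZeroDivisors Binf)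
            (algebraMap (RatFunc k) L (RatFunc.X : RatFunc k) ^ r) * Iinf) ↔
        z ∈ Submodule.span k (Set.range
          (fun p : {ij : Fin n × ℕ // (ij.2 : ℤ) ≤ d ij.1 + r} =>
            b p.1.1 * algebraMap (RatFunc k) L (RatFunc.X : RatFunc k) ^ (p.1.2 : ℕ)))) ∧
    (∀ (b' v' : Fin n → L) (P' : Matrix (Fin n) (Fin n) (RatFunc k)) (d' : Fin n → ℤ),
      IsReducedBasisPair k L Ainf B Binf n I Iinf b' v' P' d' →
      ∃ σ : Equiv.Perm (Fin n), ∀ i, d' i = d (σ i)) := by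
  classical
  obtain ⟨h1, h2, h3, h4, h5, h6, h7⟩ := hdata
  have hAmem : ∀ z : RatFunc k, z ∈ Ainf ↔ ratDeg z ≤ 0 := by
    intro z
    rw [← SetLike.mem_coe, hAinf]
    exact mem_infinitePlaceRing_iff
  have hxint : IsIntegral (RatFunc k) x :=
    ⟨f.map (algebraMap (Polynomial k) (RatFunc k)), hfmonic.map _, hx⟩
  have hmp : minpoly (RatFunc k) x = f.map (algebraMap (Polynomial k) (RatFunc k)) :=
    (minpoly.eq_of_irreducible_of_monic hfirr hx (hfmonic.map _)).symm
  have htop : IntermediateField.adjoin (RatFunc k) {x} = ⊤ := by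
    apply IntermediateField.toSubalgebra_injective
    rw [IntermediateField.top_toSubalgebra,
      IntermediateField.adjoin_simple_toSubalgebra_of_isAlgebraic hxint.isAlgebraic]
    exact hxgen
  have hrank : Module.finrank (RatFunc k) L = n := by
    have hfr := IntermediateField.adjoin.finrank hxint
    rw [htop, IntermediateField.finrank_top', hmp, hfmonic.natDegree_map, hfn] at hfr
    exact hfr
  obtain ⟨res1, res2, res3⟩ :=
    hess_aux Ainf hAmem hAinfL B Binf hrank hn I Iinf b v P d h1 h2 h3 h4 h5 h6 h7
  refine ⟨res1, res2, res3, ?_⟩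
  intro b' v' P' d' hdata'
  obtain ⟨h1', h2', h3', h4', h5', h6', h7'⟩ := hdata'
  obtain ⟨-, -, res3'⟩ :=
    hess_aux Ainf hAmem hAinfL B Binf hrank hn I Iinf b' v' P' d' h1' h2' h3' h4' h5' h6' h7'
  apply perm_of_counts
  intro r
  obtain ⟨li, hiff⟩ := res3 r
  obtain ⟨li', hiff'⟩ := res3' r
  haveI iF : Fintype {ij : Fin n × ℕ // (ij.2 : ℤ) ≤ d ij.1 + r} := by
    refine Fintype.ofEquiv (Σ i : Fin n, Fin ((d i + r + 1).toNat)) ?_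
    exact
    { toFun := fun q => ⟨(q.1, (q.2 : ℕ)), by
        have := q.2.2
        show ((q.2 : ℕ) : ℤ) ≤ d q.1 + r
        omega⟩
      invFun := fun p => ⟨p.1.1, ⟨p.1.2, by have := p.2; omega⟩⟩
      left_inv := fun q => rfl
      right_inv := fun p => rfl }
  haveI iF' : Fintype {ij : Fin n × ℕ // (ij.2 : ℤ) ≤ d' ij.1 + r} := by
    refine Fintype.ofEquiv (Σ i : Fin n, Fin ((d' i + r + 1).toNat)) ?_
    exact
    { toFun := fun q => ⟨(q.1, (q.2 : ℕ)), by
        have := q.2.2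
        show ((q.2 : ℕ) : ℤ) ≤ d' q.1 + r
        omega⟩
      invFun := fun p => ⟨p.1.1, ⟨p.1.2, by have := p.2; omega⟩⟩
      left_inv := fun q => rfl
      right_inv := fun p => rfl }
  have hspan : Submodule.span k (Set.range
      (fun p : {ij : Fin n × ℕ // (ij.2 : ℤ) ≤ d ij.1 + r} =>
        b p.1.1 * algebraMap (RatFunc k) L (RatFunc.X : RatFunc k) ^ (p.1.2 : ℕ)))
      = Submodule.span k (Set.range
      (fun p : {ij : Fin n × ℕ // (ij.2 : ℤ) ≤ d' ij.1 + r} =>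
        b' p.1.1 * algebraMap (RatFunc k) L (RatFunc.X : RatFunc k) ^ (p.1.2 : ℕ))) :=
    Submodule.ext fun z => ((hiff z).symm.trans (hiff' z))
  have hf1 := finrank_span_eq_card li
  have hf2 := finrank_span_eq_card li'
  rw [← card_index d r iF, ← card_index d' r iF', ← hf1, ← hf2]
  show Module.finrank k ↥(Submodule.span k _) = Module.finrank k ↥(Submodule.span k _)
  rw [hspan]
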